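/- arXiv:1206.3688 — 6 statements merged into one kernel-verified Lean document; each statement's English description precedes it below -/
import Mathlib

section
/- Let μ ∈ (0,1), let X be a nonnegative random variable such that X^μ has density y ↦ (sin(πμ)/(πμ)) · 1/(y² + 2y cos(πμ) + 1) on [0,∞), and set A = 1/(1+X). Then A has density z ↦ (sin(πμ)/π) · 1/( z(1-z)·[ ((1-z)/z)^μ + (z/(1-z))^μ + 2cos(πμ) ] ) on (0,1). -/
open MeasureTheory Real

theorem density_of_A
    {Ω : Type*} [MeasurableSpace Ω] (P : Measure Ω) [IsProbabilityMeasure P]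
    (μ : ℝ) (hμ : μ ∈ Set.Ioo (0:ℝ) 1)
    (X : Ω → ℝ) (hX : Measurable X) (hXpos : ∀ ω, 0 ≤ X ω)
    (hlaw : P.map (fun ω => X ω ^ μ) =
      (volume.restrict (Set.Ici (0:ℝ))).withDensity
        (fun y => ENNReal.ofReal (Real.sin (π * μ) / (π * μ) *
          (1 / (y ^ 2 + 2 * y * Real.cos (π * μ) + 1))))) :
    P.map (fun ω => 1 / (1 + X ω)) =
      (volume.restrict (Set.Ioo (0:ℝ) 1)).withDensity
        (fun z => ENNReal.ofReal (Real.sin (π * μ) / π *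
          (1 / (z * (1 - z) *
            (((1 - z) / z) ^ μ + (z / (1 - z)) ^ μ + 2 * Real.cos (π * μ)))))) := by
  obtain ⟨hμ0, hμ1⟩ := hμ
  have hμne : μ ≠ 0 := ne_of_gt hμ0
  have hπμ : 0 < π * μ := mul_pos Real.pi_pos hμ0
  have hsin : 0 < Real.sin (π * μ) := by
    apply Real.sin_pos_of_pos_of_lt_pi hπμ
    calc π * μ < π * 1 := by nlinarith [Real.pi_pos]
    _ = π := mul_one π
  -- the forward map g : y ↦ 1/(1 + y^(1/μ))
  set g : ℝ → ℝ := fun y => 1 / (1 + |y| ^ μ⁻¹) with hg_def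
  have hg_meas : Measurable g := by
    have hc : Continuous fun y : ℝ => |y| ^ μ⁻¹ := by
      apply continuous_iff_continuousAt.2 fun x => ?_
      exact (Real.continuousAt_rpow_const |x| μ⁻¹ (Or.inr (by positivity))).comp
        (continuous_abs.continuousAt)
    refine (continuous_const.div (continuous_const.add hc) (fun x => ?_)).measurable
    have : (0:ℝ) ≤ |x| ^ μ⁻¹ := Real.rpow_nonneg (abs_nonneg x) _
    exact ne_of_gt (show (0:ℝ) < 1 + |x| ^ μ⁻¹ by linarith)
  have hY_meas : Measurable fun ω => X ω ^ μ := by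
    have hc : Continuous fun y : ℝ => y ^ μ := by
      apply continuous_iff_continuousAt.2 fun x => ?_
      exact Real.continuousAt_rpow_const x μ (Or.inr hμ0.le)
    exact hc.measurable.comp hX
  have key : (fun ω => 1 / (1 + X ω)) = g ∘ fun ω => X ω ^ μ := by
    funext ω
    have h1 : |X ω ^ μ| = X ω ^ μ := abs_of_nonneg (Real.rpow_nonneg (hXpos ω) _)
    simp only [Function.comp_apply, hg_def, h1,
      Real.rpow_rpow_inv (hXpos ω) hμne]
  rw [key, ← Measure.map_map hg_meas hY_meas, hlaw,
    ← MeasureTheory.restrict_Ioi_eq_restrict_Ici]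
  -- the inverse map h : z ↦ ((1-z)/z)^μ
  set h : ℝ → ℝ := fun z => ((1 - z) / z) ^ μ with hh_def
  have hgh : ∀ z ∈ Set.Ioo (0:ℝ) 1, g (h z) = z := by
    intro z hz
    obtain ⟨hz0, hz1⟩ := hz
    have hr : 0 < (1 - z) / z := div_pos (by linarith) hz0
    have habs : |((1 - z) / z) ^ μ| = ((1 - z) / z) ^ μ :=
      abs_of_nonneg (Real.rpow_nonneg hr.le _)
    have : (((1 - z) / z) ^ μ) ^ μ⁻¹ = (1 - z) / z :=
      Real.rpow_rpow_inv hr.le hμne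
    simp only [hg_def, hh_def, habs, this]
    have h2 : 1 + (1 - z) / z = 1 / z := by field_simp; ring
    rw [h2, one_div_one_div]
  have hhg : ∀ y ∈ Set.Ioi (0:ℝ), h (g y) = y := by
    intro y hy
    have hy0 : (0:ℝ) < y := hy
    have hay : |y| = y := abs_of_pos hy0
    have ht : 0 < y ^ μ⁻¹ := Real.rpow_pos_of_pos hy0 _
    have h1t : (0:ℝ) < 1 + y ^ μ⁻¹ := by linarith
    have hgy : (1 - g y) / g y = y ^ μ⁻¹ := by
      simp only [hg_def, hay]
      field_simp
      ring
    simp only [hh_def, hgy, Real.rpow_inv_rpow hy0.le hμne]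
  have hg_mem : ∀ y ∈ Set.Ioi (0:ℝ), g y ∈ Set.Ioo (0:ℝ) 1 := by
    intro y hy
    have hy0 : (0:ℝ) < y := hy
    have hay : |y| = y := abs_of_pos hy0
    have ht : 0 < y ^ μ⁻¹ := Real.rpow_pos_of_pos hy0 _
    constructor
    · simp only [hg_def, hay]; positivity
    · simp only [hg_def, hay]
      rw [div_lt_one (by linarith)]
      linarith
  have hh_mem : ∀ z ∈ Set.Ioo (0:ℝ) 1, h z ∈ Set.Ioi (0:ℝ) := by
    intro z hz
    obtain ⟨hz0, hz1⟩ := hz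
    exact Real.rpow_pos_of_pos (div_pos (by linarith) hz0) _
  apply Measure.ext fun E hE => ?_
  rw [Measure.map_apply hg_meas hE, withDensity_apply _ (hg_meas hE),
    Measure.restrict_restrict (hg_meas hE),
    withDensity_apply _ hE, Measure.restrict_restrict hE]
  -- set S and image identity
  set S : Set ℝ := E ∩ Set.Ioo (0:ℝ) 1 with hS_def
  have hS_meas : MeasurableSet S := hE.inter measurableSet_Ioo
  have himg : g ⁻¹' E ∩ Set.Ioi 0 = h '' S := by
    ext y
    constructor
    · rintro ⟨hyE, hy⟩
      refine ⟨g y, ⟨hyE, hg_mem y hy⟩, hhg y hy⟩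
    · rintro ⟨z, ⟨hzE, hz⟩, rfl⟩
      exact ⟨by rw [Set.mem_preimage, hgh z hz]; exact hzE, hh_mem z hz⟩
  rw [himg]
  -- change of variables
  set h' : ℝ → ℝ := fun z =>
    ((-1) * z - (1 - z) * 1) / z ^ 2 * μ * ((1 - z) / z) ^ (μ - 1) with hh'_def
  have hderiv : ∀ z ∈ S, HasDerivWithinAt h (h' z) S z := by
    intro z hz
    obtain ⟨hzE, hz0, hz1⟩ := hz
    have hu : HasDerivAt (fun z : ℝ => (1 - z) / z)
        (((-1) * z - (1 - z) * 1) / z ^ 2) z := by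
      exact (HasDerivAt.div ((hasDerivAt_id z).const_sub 1) (hasDerivAt_id z)
        (ne_of_gt hz0))
    have hrne : (1 - z) / z ≠ 0 := ne_of_gt (div_pos (by linarith) hz0)
    exact ((hu.rpow_const (Or.inl hrne)).hasDerivWithinAt)
  have hinj : Set.InjOn h S := by
    intro a ha b hb hab
    have := congrArg g hab
    rwa [hgh a ha.2, hgh b hb.2] at this
  have hchg := lintegral_image_eq_lintegral_abs_det_fderiv_mul volume hS_meas
    (fun z hz => ((hderiv z hz).hasFDerivWithinAt)) hinj
    (fun y => ENNReal.ofReal (Real.sin (π * μ) / (π * μ) *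
      (1 / (y ^ 2 + 2 * y * Real.cos (π * μ) + 1))))
  rw [hchg]
  -- pointwise identity of densities
  apply setLIntegral_congr_fun hS_meas
  intro z hz
  obtain ⟨hzE, hz0, hz1⟩ := hz
  have hz1' : (0:ℝ) < 1 - z := by linarith
  have hr : 0 < (1 - z) / z := div_pos hz1' hz0
  have ht : 0 < ((1 - z) / z) ^ μ := Real.rpow_pos_of_pos hr _
  set t : ℝ := ((1 - z) / z) ^ μ with ht_def
  set c : ℝ := Real.cos (π * μ) with hc_def
  have hQ1 : 0 < t ^ 2 + 2 * t * c + 1 := by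
    nlinarith [sq_nonneg (t + c), Real.sin_sq_add_cos_sq (π * μ), hsin, sq_nonneg (Real.sin (π * μ))]
  beta_reduce
  rw [ContinuousLinearMap.det_toSpanSingleton, ← ENNReal.ofReal_mul (abs_nonneg _)]
  congr 1
  -- now a real-number identity
  have habs : |h' z| = μ * (t / ((1 - z) / z)) / z ^ 2 := by
    have hr1 : ((1 - z) / z) ^ (μ - 1) = t / ((1 - z) / z) := by
      rw [ht_def, Real.rpow_sub hr, Real.rpow_one]
    rw [hh'_def]
    simp only [hr1]
    have hnum : ((-1) * z - (1 - z) * 1) / z ^ 2 = -(1 / z ^ 2) := by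
      field_simp; ring
    rw [hnum, abs_of_nonpos (by
      have : 0 < t / ((1 - z) / z) := div_pos ht hr
      nlinarith [sq_nonneg z, this, hμ0, mul_pos (mul_pos (one_div_pos.2 (pow_pos hz0 2)) hμ0) this])]
    have hpos : 0 < 1 / z ^ 2 := by positivity
    ring
  rw [habs]
  have hinvr : z / (1 - z) = ((1 - z) / z)⁻¹ := by
    rw [inv_div]
  have hinvt : (z / (1 - z)) ^ μ = t⁻¹ := by
    rw [hinvr, Real.inv_rpow hr.le, ht_def]
  rw [hinvt, show h z = t from rfl]
  have hzr : 1 - z = z * ((1 - z) / z) := by field_simp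
  have hrne : (1 - z) / z ≠ 0 := ne_of_gt hr
  have key2 : t + t⁻¹ + 2 * c = (t ^ 2 + 2 * t * c + 1) / t := by
    field_simp; ring
  rw [key2]
  conv_rhs => rw [hzr]
  field_simp
end

section
/- For μ ∈ (0,1), the function z ↦ (sin(πμ)/π) · 1/( z(1-z)·[ ((1-z)/z)^μ + (z/(1-z))^μ + 2cos(πμ) ] ) is a probability density on (0,1). -/
open MeasureTheory Real Set Filter

lemma alg_key (μ s σ c z : ℝ) (hs : 0 < s) (hσ : 0 < σ) (hz : 0 < z) (h1z : 0 < 1 - z)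
    (hμ : 0 < μ) (hc : σ^2 + c^2 = 1) (hden : 0 < s⁻¹ + s + 2*c) :
    1 / (π * μ) * (1 / (1 + ((s + c) / σ) ^ 2) *
        ((1 * (1 - z) - z * (-1)) / (1 - z) ^ 2 * μ * (s / (z / (1 - z))) / σ))
      = σ / π * (1 / (z * (1 - z) * (s⁻¹ + s + 2 * c))) := by
  have hπ : (0:ℝ) < π := pi_pos
  have e1 : 1 + ((s + c) / σ) ^ 2 = (s^2 + 2*c*s + 1) / σ^2 := by
    field_simp
    linear_combination hc
  have e2 : s⁻¹ + s + 2*c = (s^2 + 2*c*s + 1) / s := by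
    field_simp; ring
  have hq : 0 < s^2 + 2*c*s + 1 := by
    have := mul_pos hs hden
    have hss : s * (s⁻¹ + s + 2*c) = s^2 + 2*c*s + 1 := by field_simp; ring
    linarith [hss ▸ this]
  rw [e1, e2]
  field_simp
  ring

theorem A_density_integrates_to_one
    (μ : ℝ) (hμ : μ ∈ Set.Ioo (0:ℝ) 1) :
    ∫ z in Set.Ioo (0:ℝ) 1,
      Real.sin (π * μ) / π *
        (1 / (z * (1 - z) *
          (((1 - z) / z) ^ μ + (z / (1 - z)) ^ μ + 2 * Real.cos (π * μ)))) = 1 := by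
  obtain ⟨hμ0, hμ1⟩ := hμ
  have hπ : (0:ℝ) < π := pi_pos
  have hπμ0 : 0 < π * μ := mul_pos hπ hμ0
  have hπμπ : π * μ < π := by nlinarith
  set c := Real.cos (π * μ) with hc_def
  set σ := Real.sin (π * μ) with hσ_def
  have hσ : 0 < σ := Real.sin_pos_of_pos_of_lt_pi hπμ0 hπμπ
  have hsum : σ ^ 2 + c ^ 2 = 1 := Real.sin_sq_add_cos_sq (π * μ)
  have hc1 : -1 < c := by nlinarith
  -- the integrand
  set f : ℝ → ℝ := fun z =>
    σ / π * (1 / (z * (1 - z) * (((1 - z) / z) ^ μ + (z / (1 - z)) ^ μ + 2 * c))) with hf_def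
  -- antiderivative
  set F : ℝ → ℝ := fun z => 1 / (π * μ) * Real.arctan (((z / (1 - z)) ^ μ + c) / σ) with hF_def
  set G : ℝ → ℝ := fun z => if z < 1 then F z else 1 / (2 * μ) with hG_def
  -- derivative on the open interval
  have hderiv : ∀ z ∈ Ioo (0:ℝ) 1, HasDerivAt G (f z) z := by
    intro z hz
    obtain ⟨hz0, hz1⟩ := hz
    have h1z : 0 < 1 - z := by linarith
    have hw : 0 < z / (1 - z) := div_pos hz0 h1z
    have hs : 0 < (z / (1 - z)) ^ μ := Real.rpow_pos_of_pos hw μ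
    -- G = F near z
    have hGF : G =ᶠ[nhds z] F := by
      filter_upwards [Iio_mem_nhds hz1] with y hy
      simp only [hG_def]
      rw [if_pos (show y < 1 from hy)]
    -- derivative of inner map
    have hd1 : HasDerivAt (fun y : ℝ => y / (1 - y))
        ((1 * (1 - z) - z * (-1)) / (1 - z) ^ 2) z :=
      (hasDerivAt_id z).div ((hasDerivAt_id z).const_sub 1) h1z.ne'
    have hd2 : HasDerivAt (fun y : ℝ => (y / (1 - y)) ^ μ)
        ((1 * (1 - z) - z * (-1)) / (1 - z) ^ 2 * μ * (z / (1 - z)) ^ (μ - 1)) z :=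
      hd1.rpow_const (Or.inl hw.ne')
    have hd3 : HasDerivAt (fun y : ℝ => ((y / (1 - y)) ^ μ + c) / σ)
        ((1 * (1 - z) - z * (-1)) / (1 - z) ^ 2 * μ * (z / (1 - z)) ^ (μ - 1) / σ) z :=
      (hd2.add_const c).div_const σ
    have hd4 := (hd3.arctan).const_mul (1 / (π * μ))
    have hFd : HasDerivAt F (f z) z := by
      refine hd4.congr_deriv (Eq.symm ?_)
      have hsm : (z / (1 - z)) ^ (μ - 1) = (z / (1 - z)) ^ μ / (z / (1 - z)) :=
        Real.rpow_sub_one hw.ne' μ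
      have ht : ((1 - z) / z) ^ μ = ((z / (1 - z)) ^ μ)⁻¹ := by
        rw [show (1 - z) / z = (z / (1 - z))⁻¹ by rw [inv_div], Real.inv_rpow hw.le]
      have hden : 0 < ((z / (1 - z)) ^ μ)⁻¹ + (z / (1 - z)) ^ μ + 2 * c := by
        have h1 : (z / (1 - z)) ^ μ * ((z / (1 - z)) ^ μ)⁻¹ = 1 := mul_inv_cancel₀ hs.ne'
        nlinarith [mul_nonneg (inv_pos.2 hs).le (sq_nonneg ((z / (1 - z)) ^ μ - 1))]
      rw [hf_def]
      simp only
      rw [ht, hsm]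
      exact (alg_key μ ((z / (1 - z)) ^ μ) σ c z hs hσ hz0 h1z hμ0 hsum hden).symm
    exact hFd.congr_of_eventuallyEq hGF
  -- nonnegativity
  have hnonneg : ∀ z ∈ Ioo (0:ℝ) 1, 0 ≤ f z := by
    rintro z ⟨hz0, hz1⟩
    have h1z : 0 < 1 - z := by linarith
    have hw : 0 < z / (1 - z) := div_pos hz0 h1z
    have hs : 0 < (z / (1 - z)) ^ μ := Real.rpow_pos_of_pos hw μ
    have ht : ((1 - z) / z) ^ μ = ((z / (1 - z)) ^ μ)⁻¹ := by
      rw [show (1 - z) / z = (z / (1 - z))⁻¹ by rw [inv_div], Real.inv_rpow hw.le]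
    have hden : 0 < ((1 - z) / z) ^ μ + (z / (1 - z)) ^ μ + 2 * c := by
      rw [ht]
      have h1 : (z / (1 - z)) ^ μ * ((z / (1 - z)) ^ μ)⁻¹ = 1 := mul_inv_cancel₀ hs.ne'
      nlinarith [mul_nonneg (inv_pos.2 hs).le (sq_nonneg ((z / (1 - z)) ^ μ - 1))]
    have : 0 < z * (1 - z) * (((1 - z) / z) ^ μ + (z / (1 - z)) ^ μ + 2 * c) :=
      mul_pos (mul_pos hz0 h1z) hden
    have h2 : 0 ≤ σ / π := le_of_lt (div_pos hσ hπ)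
    exact mul_nonneg h2 (le_of_lt (div_pos one_pos this))
  -- continuity of F on [0,1)
  have hFc : ∀ x ∈ Ico (0:ℝ) 1, ContinuousAt F x := by
    rintro x ⟨hx0, hx1⟩
    have h1x : 0 < 1 - x := by linarith
    have hcont1 : ContinuousAt (fun y : ℝ => y / (1 - y)) x :=
      (continuousAt_id).div (continuousAt_const.sub continuousAt_id) h1x.ne'
    have hcont2 : ContinuousAt (fun y : ℝ => (y / (1 - y)) ^ μ) x :=
      hcont1.rpow_const (Or.inr hμ0.le)
    exact continuousAt_const.mul
      (Real.continuous_arctan.continuousAt.comp ((hcont2.add continuousAt_const).div_const σ))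
  -- limit of F at 1 from the left
  have hFlim : Tendsto F (nhdsWithin 1 (Iio (1:ℝ))) (nhds (1 / (2 * μ))) := by
    have h1 : Tendsto (fun y : ℝ => 1 - y) (nhdsWithin 1 (Iio (1:ℝ))) (nhdsWithin 0 (Ioi (0:ℝ))) := by
      apply tendsto_nhdsWithin_of_tendsto_nhds_of_eventually_within
      · have h := ((tendsto_id : Tendsto id (nhds (1:ℝ)) (nhds 1)).const_sub 1)
        have : Tendsto (fun y : ℝ => 1 - y) (nhds 1) (nhds 0) := by simpa using h
        exact this.mono_left nhdsWithin_le_nhds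
      · filter_upwards [self_mem_nhdsWithin] with y hy
        simp only [Set.mem_Iio] at hy
        exact Set.mem_Ioi.mpr (by linarith)
    have h2 : Tendsto (fun y : ℝ => y / (1 - y)) (nhdsWithin 1 (Iio (1:ℝ))) atTop := by
      have hinv : Tendsto (fun y : ℝ => (1 - y)⁻¹) (nhdsWithin 1 (Iio (1:ℝ))) atTop :=
        tendsto_inv_nhdsGT_zero.comp h1
      have hid : Tendsto (fun y : ℝ => y) (nhdsWithin 1 (Iio (1:ℝ))) (nhds 1) :=
        tendsto_id.mono_left nhdsWithin_le_nhds
      have := hid.pos_mul_atTop one_pos hinv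
      simpa [div_eq_mul_inv] using this
    have h3 : Tendsto (fun y : ℝ => ((y / (1 - y)) ^ μ + c) / σ) (nhdsWithin 1 (Iio (1:ℝ))) atTop := by
      have h3' : Tendsto (fun y : ℝ => (y / (1 - y)) ^ μ) (nhdsWithin 1 (Iio (1:ℝ))) atTop :=
        (tendsto_rpow_atTop hμ0).comp h2
      exact ((tendsto_atTop_add_const_right _ c h3').atTop_div_const hσ)
    have h4 : Tendsto F (nhdsWithin 1 (Iio (1:ℝ))) (nhds (1 / (π * μ) * (π / 2))) :=
      (((Real.tendsto_arctan_atTop.mono_right nhdsWithin_le_nhds).comp h3).const_mul _)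
    have : 1 / (π * μ) * (π / 2) = 1 / (2 * μ) := by
      field_simp
    rwa [this] at h4
  -- continuity of G on [0,1]
  have hGc : ContinuousOn G (Icc (0:ℝ) 1) := by
    intro x hx
    rcases eq_or_lt_of_le hx.2 with hx1 | hx1
    · subst hx1
      have hG1 : G 1 = 1 / (2 * μ) := by simp [hG_def]
      rw [ContinuousWithinAt, hG1]
      have hGonIio : Tendsto G (nhdsWithin 1 (Iio (1:ℝ))) (nhds (1 / (2 * μ))) := by
        refine hFlim.congr' ?_
        filter_upwards [self_mem_nhdsWithin] with y hy
        simp only [Set.mem_Iio] at hy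
        simp [hG_def, hy]
      have hsub : Icc (0:ℝ) 1 ⊆ Iio 1 ∪ {1} := by
        intro y hy
        rcases lt_or_eq_of_le hy.2 with h | h
        · exact Or.inl h
        · exact Or.inr (by simp [h])
      refine Tendsto.mono_left ?_ (nhdsWithin_mono 1 hsub)
      rw [nhdsWithin_union, nhdsWithin_singleton, tendsto_sup]
      refine ⟨hGonIio, ?_⟩
      rw [tendsto_pure_left]
      intro s hs
      have : G 1 ∈ s := by rw [hG1]; exact mem_of_mem_nhds hs
      simpa [hG1] using this
    · have hGF : G =ᶠ[nhds x] F := by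
        filter_upwards [Iio_mem_nhds hx1] with y hy
        simp only [hG_def]
        rw [if_pos (show y < 1 from hy)]
      exact ((hFc x ⟨hx.1, hx1⟩).congr hGF.symm).continuousWithinAt
  -- integrability
  have hint : IntegrableOn f (Ioc (0:ℝ) 1) :=
    intervalIntegral.integrableOn_deriv_of_nonneg hGc hderiv hnonneg
  have hii : IntervalIntegrable f volume 0 1 :=
    (intervalIntegrable_iff_integrableOn_Ioc_of_le zero_le_one).mpr hint
  have heval : ∫ y in (0:ℝ)..1, f y = G 1 - G 0 :=
    intervalIntegral.integral_eq_sub_of_hasDerivAt_of_le zero_le_one hGc hderiv hii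
  -- endpoint values
  have hG1 : G 1 = 1 / (2 * μ) := by simp [hG_def]
  have hG0 : G 0 = 1 / (π * μ) * (π / 2 - π * μ) := by
    have h0 : ((0:ℝ) / (1 - 0)) ^ μ = 0 := by
      rw [show (0:ℝ) / (1 - 0) = 0 by norm_num, Real.zero_rpow hμ0.ne']
    have harc : Real.arctan (c / σ) = π / 2 - π * μ := by
      have htan : c / σ = Real.tan (π / 2 - π * μ) := by
        rw [Real.tan_pi_div_two_sub, Real.tan_eq_sin_div_cos, ← hσ_def, ← hc_def, inv_div]
      rw [htan, Real.arctan_tan (by linarith) (by linarith)]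
    simp only [hG_def, hF_def]
    rw [if_pos (by norm_num : (0:ℝ) < 1), h0, zero_add, harc]
  -- conclude
  have hIoo : ∫ z in Ioo (0:ℝ) 1, f z = 1 := by
    rw [← MeasureTheory.integral_Ioc_eq_integral_Ioo,
      ← intervalIntegral.integral_of_le zero_le_one, heval, hG1, hG0]
    field_simp
    ring
  exact hIoo
end

section
/- Let C be a standard Cauchy random variable and n ≥ 2 an integer. Then the random variable A = 1/(1 + (n-1)²C²) has density z ↦ (1/π) · 1/( √z · √(1-z) · [ (n-1)z + (1-z)/(n-1) ] ) on (0,1). -/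
open MeasureTheory Real

lemma lintegral_image_abs_deriv {s : Set ℝ} {f f' : ℝ → ℝ} (hs : MeasurableSet s)
    (hf' : ∀ x ∈ s, HasDerivWithinAt f (f' x) s x) (hf : Set.InjOn f s) (g : ℝ → ENNReal) :
    ∫⁻ x in f '' s, g x = ∫⁻ x in s, ENNReal.ofReal |f' x| * g (f x) := by
  simpa only [ContinuousLinearMap.det_toSpanSingleton] using
    lintegral_image_eq_lintegral_abs_det_fderiv_mul volume hs
      (fun x hx => (hf' x hx).hasFDerivWithinAt) hf g

noncomputable def gb (b x : ℝ) : ℝ := 1 / (1 + b ^ 2 * x ^ 2)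
noncomputable def phib (b z : ℝ) : ℝ := Real.sqrt ((1 - z) / z) / b
noncomputable def phib' (b z : ℝ) : ℝ := (-(1 / z ^ 2)) / (2 * Real.sqrt ((1 - z) / z)) / b

lemma gb_phib {b : ℝ} (hb : 1 ≤ b) {z : ℝ} (hz : z ∈ Set.Ioo (0:ℝ) 1) : gb b (phib b z) = z := by
  have hb0 : (0:ℝ) < b := lt_of_lt_of_le one_pos hb
  have hu : 0 ≤ (1 - z) / z := div_nonneg (by linarith [hz.2]) hz.1.le
  have hz0 : z ≠ 0 := ne_of_gt hz.1
  simp only [gb, phib, div_pow, Real.sq_sqrt hu]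
  rw [show b ^ 2 * ((1 - z) / z / b ^ 2) = (1-z)/z by field_simp]
  field_simp
  ring

lemma phib_gb {b : ℝ} (hb : 1 ≤ b) {x : ℝ} (hx : 0 < x) : phib b (gb b x) = x := by
  have hb0 : (0:ℝ) < b := lt_of_lt_of_le one_pos hb
  have h1 : (0:ℝ) < 1 + b ^ 2 * x ^ 2 := by positivity
  have h2 : (1 - gb b x) / gb b x = b ^ 2 * x ^ 2 := by
    simp only [gb]
    field_simp
    ring
  rw [phib, h2, show b ^ 2 * x ^ 2 = (b * x) ^ 2 by ring, Real.sqrt_sq (by positivity)]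
  field_simp

lemma hasDeriv_phib {b : ℝ} {z : ℝ} (hz : z ∈ Set.Ioo (0:ℝ) 1) :
    HasDerivAt (phib b) (phib' b z) z := by
  have hz0 : z ≠ 0 := ne_of_gt hz.1
  have hu : 0 < (1 - z) / z := div_pos (by linarith [hz.2]) hz.1
  have h1 : HasDerivAt (fun z : ℝ => (1 - z) / z) (-(1 / z ^ 2)) z := by
    have := ((hasDerivAt_id z).const_sub 1).div (hasDerivAt_id z) hz0
    refine this.congr_deriv ?_
    simp only [id]
    ring
  exact ((h1.sqrt (ne_of_gt hu)).div_const b)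

lemma density_identity {b : ℝ} (hb : 1 ≤ b) {z : ℝ} (hz : z ∈ Set.Ioo (0:ℝ) 1) :
    |phib' b z| * (1 / (π * (1 + phib b z ^ 2))) =
      (1/2) * ((1 / π) * (1 / (Real.sqrt z * Real.sqrt (1 - z) * (b * z + (1 - z) / b)))) := by
  have hb0 : (0:ℝ) < b := lt_of_lt_of_le one_pos hb
  have hz0 : (0:ℝ) < z := hz.1
  have hz1 : (0:ℝ) < 1 - z := by linarith [hz.2]
  set sz := Real.sqrt z with hszdef
  set s1 := Real.sqrt (1 - z) with hs1def
  have hszpos : 0 < sz := Real.sqrt_pos.mpr hz0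
  have hs1pos : 0 < s1 := Real.sqrt_pos.mpr hz1
  have hsz : sz ^ 2 = z := Real.sq_sqrt hz0.le
  have hs1 : s1 ^ 2 = 1 - z := Real.sq_sqrt hz1.le
  have hdiv : Real.sqrt ((1 - z) / z) = s1 / sz := Real.sqrt_div hz1.le z
  have habs : |phib' b z| = (1 / z ^ 2) / (2 * (s1 / sz)) / b := by
    rw [phib', hdiv, abs_div, abs_div, abs_neg, abs_of_pos (by positivity),
      abs_of_pos (by positivity), abs_of_pos hb0]
  rw [habs, phib, hdiv]
  have hs1' : s1 ^ 2 = 1 - sz ^ 2 := by rw [hsz, hs1]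
  rw [← hsz, show (1:ℝ) - sz ^ 2 = s1 ^ 2 from hs1'.symm]
  have hkey : 1 + (s1 / sz / b) ^ 2 = (sz ^ 2 * b ^ 2 + s1 ^ 2) / (sz ^ 2 * b ^ 2) := by
    field_simp
  rw [hkey]
  have hpos : (0:ℝ) < sz ^ 2 * b ^ 2 + s1 ^ 2 := by positivity
  have hpi := Real.pi_pos
  have hne : b * sz ^ 2 + s1 ^ 2 / b ≠ 0 := by positivity
  field_simp

theorem density_of_A_n
    {Ω : Type*} [MeasurableSpace Ω] (P : Measure Ω) [IsProbabilityMeasure P]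
    (C : Ω → ℝ) (hC : Measurable C)
    (hClaw : P.map C = volume.withDensity (fun x => ENNReal.ofReal (1 / (π * (1 + x ^ 2)))))
    (n : ℕ) (hn : 2 ≤ n) :
    P.map (fun ω => 1 / (1 + ((n : ℝ) - 1) ^ 2 * C ω ^ 2)) =
      (volume.restrict (Set.Ioo (0:ℝ) 1)).withDensity
        (fun z => ENNReal.ofReal ((1 / π) *
          (1 / (Real.sqrt z * Real.sqrt (1 - z) *
            (((n : ℝ) - 1) * z + (1 - z) / ((n : ℝ) - 1)))))) := by
  have h2n : (2:ℝ) ≤ (n:ℝ) := by exact_mod_cast hn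
  have hgm : Measurable (gb ((n:ℝ) - 1)) := by unfold gb; fun_prop
  have hcomp : (fun ω => 1 / (1 + ((n:ℝ) - 1) ^ 2 * C ω ^ 2)) = (gb ((n:ℝ) - 1)) ∘ C := rfl
  rw [hcomp, ← Measure.map_map hgm hC, hClaw]
  set b : ℝ := (n:ℝ) - 1 with hbdef
  have hb : (1:ℝ) ≤ b := by rw [hbdef]; linarith
  have hb0 : (0:ℝ) < b := lt_of_lt_of_le one_pos hb
  clear_value b
  set f : ℝ → ENNReal := fun x => ENNReal.ofReal (1 / (π * (1 + x ^ 2))) with hfdef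
  set d : ℝ → ℝ := fun z => (1 / π) * (1 / (Real.sqrt z * Real.sqrt (1 - z) * (b * z + (1 - z) / b))) with hddef
  ext t ht
  rw [Measure.map_apply hgm ht, withDensity_apply _ (hgm ht), withDensity_apply _ ht,
      Measure.restrict_restrict ht]
  set S : Set ℝ := gb b ⁻¹' t with hSdef
  have hS : MeasurableSet S := hgm ht
  set s : Set ℝ := t ∩ Set.Ioo 0 1 with hsdef
  have hs : MeasurableSet s := ht.inter measurableSet_Ioo
  set hhalf : ℝ → ENNReal := fun z => ENNReal.ofReal ((1/2) * d z) with hhalfdef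
  have hhm : Measurable hhalf := by
    apply Measurable.ennreal_ofReal
    simp only [hddef]
    fun_prop
  have himg : S ∩ Set.Ioi 0 = phib b '' s := by
    ext x
    constructor
    · rintro ⟨hxt, hx⟩
      simp only [Set.mem_Ioi] at hx
      refine ⟨gb b x, ⟨hxt, ?_, ?_⟩, phib_gb hb hx⟩
      · simp only [gb]; positivity
      · simp only [gb]
        rw [div_lt_one (by positivity)]
        have := mul_pos (pow_pos hb0 2) (pow_pos hx 2)
        linarith
    · rintro ⟨z, ⟨hzt, hz⟩, rfl⟩
      have hu : 0 < (1 - z) / z := div_pos (by linarith [hz.2]) hz.1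
      constructor
      · simp only [hSdef, Set.mem_preimage, gb_phib hb hz]; exact hzt
      · simp only [Set.mem_Ioi, phib]
        exact div_pos (Real.sqrt_pos.mpr hu) hb0
  have hIpos : ∫⁻ x in S ∩ Set.Ioi 0, f x = ∫⁻ z in s, hhalf z := by
    rw [himg, lintegral_image_abs_deriv hs
      (fun z hz => (hasDeriv_phib hz.2).hasDerivWithinAt)
      (fun z1 h1 z2 h2 he => by rw [← gb_phib hb h1.2, ← gb_phib hb h2.2, he]) f]
    refine setLIntegral_congr_fun hs (fun z hz => ?_)
    simp only [hfdef, hhalfdef]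
    rw [← ENNReal.ofReal_mul (abs_nonneg _), density_identity hb hz.2]
  have heven : ∀ x : ℝ, gb b (-x) = gb b x := fun x => by simp [gb]
  have hfeven : ∀ x : ℝ, f (-x) = f x := fun x => by simp [hfdef]
  have hnegset : S ∩ Set.Iio 0 = Neg.neg ⁻¹' (S ∩ Set.Ioi 0) := by
    ext x
    simp only [hSdef, Set.mem_inter_iff, Set.mem_preimage, Set.mem_Iio, Set.mem_Ioi, heven]
    constructor
    · rintro ⟨h1, h2⟩; exact ⟨h1, by linarith⟩
    · rintro ⟨h1, h2⟩; exact ⟨h1, by linarith⟩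
  have hIneg : ∫⁻ x in S ∩ Set.Iio 0, f x = ∫⁻ x in S ∩ Set.Ioi 0, f x := by
    rw [hnegset]
    rw [show (∫⁻ x in Neg.neg ⁻¹' (S ∩ Set.Ioi 0), f x) = ∫⁻ x in Neg.neg ⁻¹' (S ∩ Set.Ioi 0), f (-x)
      from lintegral_congr fun x => (hfeven x).symm]
    exact (Measure.measurePreserving_neg volume).setLIntegral_comp_preimage_emb
      (MeasurableEquiv.neg ℝ).measurableEmbedding f (S ∩ Set.Ioi 0)
  have hIci : ∫⁻ x in S ∩ Set.Ici 0, f x = ∫⁻ x in S ∩ Set.Ioi 0, f x :=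
    setLIntegral_congr ((ae_eq_refl _).inter Ioi_ae_eq_Ici.symm)
  have hsplit : S = (S ∩ Set.Iio 0) ∪ (S ∩ Set.Ici 0) := by
    rw [← Set.inter_union_distrib_left, Set.Iio_union_Ici, Set.inter_univ]
  calc ∫⁻ x in S, f x
      = (∫⁻ x in S ∩ Set.Iio 0, f x) + ∫⁻ x in S ∩ Set.Ici 0, f x := by
        conv_lhs => rw [hsplit]
        rw [lintegral_union (hS.inter measurableSet_Ici)
          ((Set.Iio_disjoint_Ici le_rfl).mono Set.inter_subset_right Set.inter_subset_right)]
    _ = (∫⁻ z in s, hhalf z) + ∫⁻ z in s, hhalf z := by rw [hIneg, hIci, hIpos]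
    _ = ∫⁻ z in s, (hhalf z + hhalf z) := by rw [lintegral_add_left hhm hhalf]
    _ = ∫⁻ z in s, ENNReal.ofReal (d z) := by
        refine setLIntegral_congr_fun hs (fun z hz => ?_)
        have hz' := hz.2
        have hd0 : 0 ≤ d z := by
          simp only [hddef]
          have h1 : (0:ℝ) < 1 - z := by linarith [hz'.2]
          have h2 : (0:ℝ) < z := hz'.1
          positivity
        simp only [hhalfdef]
        rw [← ENNReal.ofReal_add (by linarith) (by linarith)]
        congr 1
        ring
end

section
/- For every integer n ≥ 2, the function z ↦ (1/π) · 1/( √z · √(1-z) · [ (n-1)z + (1-z)/(n-1) ] ) is a probability density on (0,1), i.e., integrates to 1. -/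
open MeasureTheory Real

theorem A_n_density_integrates_to_one (n : ℕ) (hn : 2 ≤ n) :
    ∫ z in Set.Ioo (0:ℝ) 1,
      (1 / π) * (1 / (Real.sqrt z * Real.sqrt (1 - z) *
        (((n : ℝ) - 1) * z + (1 - z) / ((n : ℝ) - 1)))) = 1 := by
  set c : ℝ := (n : ℝ) - 1 with hcdef
  have hn2 : (2:ℝ) ≤ (n:ℝ) := by exact_mod_cast hn
  have hc1 : (1:ℝ) ≤ c := by simp only [hcdef]; linarith
  have hc0 : (0:ℝ) < c := lt_of_lt_of_le one_pos hc1
  set φ : ℝ → ℝ := fun z => c * (Real.sqrt z / Real.sqrt (1 - z)) with hφdef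
  set ψ : ℝ → ℝ := fun z => c / (2 * Real.sqrt z * Real.sqrt (1 - z) * (1 - z)) with hψdef
  -- image of (0,1) under φ is (0,∞)
  have himg : φ '' Set.Ioo 0 1 = Set.Ioi 0 := by
    ext u
    constructor
    · rintro ⟨z, ⟨hz0, hz1⟩, rfl⟩
      have h1z : (0:ℝ) < 1 - z := by linarith
      exact mul_pos hc0 (div_pos (Real.sqrt_pos.2 hz0) (Real.sqrt_pos.2 h1z))
    · intro hu
      have hu0 : (0:ℝ) < u := hu
      set t : ℝ := u / c with htdef
      have ht0 : 0 < t := div_pos hu0 hc0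
      have htt : (0:ℝ) < 1 + t ^ 2 := by positivity
      refine ⟨t ^ 2 / (1 + t ^ 2), ⟨by positivity, ?_⟩, ?_⟩
      · rw [div_lt_one htt]; linarith
      · have h1z : 1 - t ^ 2 / (1 + t ^ 2) = 1 / (1 + t ^ 2) := by
          field_simp
          ring
        have hzz : t ^ 2 / (1 + t ^ 2) / (1 - t ^ 2 / (1 + t ^ 2)) = t ^ 2 := by
          rw [h1z]; field_simp
        show c * (Real.sqrt (t ^ 2 / (1 + t ^ 2)) / Real.sqrt (1 - t ^ 2 / (1 + t ^ 2))) = u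
        rw [← Real.sqrt_div (by positivity), hzz, Real.sqrt_sq ht0.le, htdef,
          mul_div_cancel₀ _ hc0.ne']
  -- injectivity
  have hmono : StrictMonoOn φ (Set.Ioo (0:ℝ) 1) := by
    rintro z ⟨hz0, hz1⟩ w ⟨hw0, hw1⟩ hzw
    have h1z : (0:ℝ) < 1 - z := by linarith
    have h1w : (0:ℝ) < 1 - w := by linarith
    have hsq : z * (1 - w) < w * (1 - z) := by nlinarith
    have hs := Real.sqrt_lt_sqrt (by positivity) hsq
    rw [Real.sqrt_mul hz0.le, Real.sqrt_mul hw0.le] at hs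
    have : Real.sqrt z / Real.sqrt (1 - z) < Real.sqrt w / Real.sqrt (1 - w) := by
      rw [div_lt_div_iff₀ (Real.sqrt_pos.2 h1z) (Real.sqrt_pos.2 h1w)]
      linarith
    exact mul_lt_mul_of_pos_left this hc0
  have hinj : Set.InjOn φ (Set.Ioo (0:ℝ) 1) := hmono.injOn
  -- derivative
  have hderiv : ∀ z ∈ Set.Ioo (0:ℝ) 1, HasDerivWithinAt φ (ψ z) (Set.Ioo 0 1) z := by
    rintro z ⟨hz0, hz1⟩
    have h1z : (0:ℝ) < 1 - z := by linarith
    have hsz : (0:ℝ) < Real.sqrt z := Real.sqrt_pos.2 hz0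
    have hsw : (0:ℝ) < Real.sqrt (1 - z) := Real.sqrt_pos.2 h1z
    have h1 : HasDerivAt Real.sqrt (1 / (2 * Real.sqrt z)) z := Real.hasDerivAt_sqrt hz0.ne'
    have h2 : HasDerivAt (fun x : ℝ => Real.sqrt (1 - x)) (1 / (2 * Real.sqrt (1 - z)) * (-1)) z :=
      (Real.hasDerivAt_sqrt h1z.ne').comp z ((hasDerivAt_id z).const_sub 1)
    have h3 := ((h1.div h2 hsw.ne').const_mul c)
    have heq : c * ((1 / (2 * Real.sqrt z) * Real.sqrt (1 - z) -
        Real.sqrt z * (1 / (2 * Real.sqrt (1 - z)) * (-1))) / Real.sqrt (1 - z) ^ 2) = ψ z := by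
      have hzz : Real.sqrt z ^ 2 = z := Real.sq_sqrt hz0.le
      have hww : Real.sqrt (1 - z) ^ 2 = 1 - z := Real.sq_sqrt h1z.le
      rw [hψdef]
      have hz3 : Real.sqrt z ^ 3 = z * Real.sqrt z := by
        rw [pow_succ, hzz]
      have hw3 : Real.sqrt (1 - z) ^ 3 = (1 - z) * Real.sqrt (1 - z) := by
        rw [pow_succ, hww]
      field_simp
      ring_nf
      rw [hzz, hww]
      ring
    rw [heq] at h3
    exact h3.hasDerivWithinAt
  have key := MeasureTheory.integral_image_eq_integral_abs_deriv_smul measurableSet_Ioo hderiv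
    hinj (fun u => (2 / π) * (1 + u ^ 2)⁻¹)
  rw [himg] at key
  have hlhs : ∫ u in Set.Ioi (0:ℝ), (2 / π) * (1 + u ^ 2)⁻¹ = 1 := by
    rw [MeasureTheory.integral_const_mul, integral_Ioi_inv_one_add_sq, Real.arctan_zero]
    field_simp
    ring
  rw [hlhs] at key
  refine Eq.trans ?_ key.symm
  apply MeasureTheory.setIntegral_congr_fun measurableSet_Ioo
  rintro z ⟨hz0, hz1⟩
  have h1z : (0:ℝ) < 1 - z := by linarith
  have hsz : (0:ℝ) < Real.sqrt z := Real.sqrt_pos.2 hz0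
  have hsw : (0:ℝ) < Real.sqrt (1 - z) := Real.sqrt_pos.2 h1z
  have hzz : Real.sqrt z ^ 2 = z := Real.sq_sqrt hz0.le
  have hww : Real.sqrt (1 - z) ^ 2 = 1 - z := Real.sq_sqrt h1z.le
  have hψpos : 0 < ψ z := by
    rw [hψdef]
    positivity
  have hφsq : φ z ^ 2 = c ^ 2 * z / (1 - z) := by
    rw [hφdef]
    simp only
    rw [mul_pow, div_pow, hzz, hww]
    ring
  have hpos1 : (0:ℝ) < 1 + φ z ^ 2 := by
    rw [hφsq]; positivity
  have hpos2 : (0:ℝ) < c * z + (1 - z) / c := by positivity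
  show (1 / π) * (1 / (Real.sqrt z * Real.sqrt (1 - z) * (c * z + (1 - z) / c))) =
      |ψ z| • ((2 / π) * (1 + φ z ^ 2)⁻¹)
  rw [abs_of_pos hψpos, smul_eq_mul, hφsq, hψdef]
  have hpos3 : (0:ℝ) < 1 + c ^ 2 * z / (1 - z) := by positivity
  field_simp
  ring
end

section
/- Let T₁, T₂ be independent one-sided stable(1/2) variables with density t ↦ (2πt³)^{-1/2} e^{-1/(2t)} on (0,∞), and let c > 0. Then T₁/(T₁ + c²T₂) has the same distribution as 1/(1 + c²C²), where C is standard Cauchy. -/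
open MeasureTheory ProbabilityTheory Real
open Set
open scoped ENNReal


lemma aux_exp_int {b : ℝ} (hb : 0 < b) :
    ∫ x in Ioi (0:ℝ), Real.exp (-(b * x)) = b⁻¹ := by
  have := integral_comp_mul_left_Ioi (fun x => Real.exp (-x)) 0 hb
  simp only [mul_zero, smul_eq_mul] at this
  rw [this, integral_exp_neg_Ioi, neg_zero, Real.exp_zero, mul_one]

lemma aux_inv_img : (fun w : ℝ => w⁻¹) '' (Ioi 0) = Ioi 0 := by
  ext y; constructor
  · rintro ⟨w, hw, rfl⟩; exact mem_Ioi.mpr (inv_pos.mpr (mem_Ioi.mp hw))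
  · intro hy; exact ⟨y⁻¹, mem_Ioi.mpr (inv_pos.mpr (mem_Ioi.mp hy)), inv_inv y⟩

lemma aux_inv_deriv : ∀ w ∈ Ioi (0:ℝ), HasDerivWithinAt (fun w : ℝ => w⁻¹)
    (-((w:ℝ) ^ 2)⁻¹) (Ioi 0) w :=
  fun w hw => ((hasDerivAt_inv (ne_of_gt hw)).hasDerivWithinAt).congr_deriv (by rw [sq])

lemma aux_inv_inj : InjOn (fun w : ℝ => w⁻¹) (Ioi 0) :=
  fun a _ b _ h => by simpa using congrArg (·⁻¹) h

lemma aux_inv_sq_exp_integrable {a : ℝ} (ha : 0 < a) :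
    IntegrableOn (fun s : ℝ => (s ^ 2)⁻¹ * Real.exp (-(a * s⁻¹))) (Ioi 0) := by
  have h := (integrableOn_image_iff_integrableOn_abs_deriv_smul measurableSet_Ioi
    aux_inv_deriv aux_inv_inj (fun s : ℝ => (s ^ 2)⁻¹ * Real.exp (-(a * s⁻¹))))
  rw [aux_inv_img] at h
  rw [h]
  have : EqOn (fun w : ℝ => |(-((w:ℝ)^2)⁻¹)| • ((((w:ℝ)⁻¹) ^ 2)⁻¹ * Real.exp (-(a * (w⁻¹)⁻¹))))
      (fun w : ℝ => Real.exp (-(a * w))) (Ioi 0) := by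
    intro w hw
    have hw0 : (w:ℝ) ≠ 0 := ne_of_gt hw
    simp only [smul_eq_mul, abs_neg, abs_inv, sq_abs, inv_inv, inv_pow]
    field_simp
    rw [abs_of_nonneg (sq_nonneg w)]
  refine (IntegrableOn.congr_fun ?_ this.symm measurableSet_Ioi)
  have := exp_neg_integrableOn_Ioi 0 ha
  refine this.congr_fun (fun x _ => by ring_nf) measurableSet_Ioi

lemma aux_inv_sq_exp {a : ℝ} (ha : 0 < a) :
    ∫ s in Ioi (0:ℝ), (s ^ 2)⁻¹ * Real.exp (-(a * s⁻¹)) = a⁻¹ := by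
  have h := integral_image_eq_integral_abs_deriv_smul measurableSet_Ioi
    aux_inv_deriv aux_inv_inj (fun s : ℝ => (s ^ 2)⁻¹ * Real.exp (-(a * s⁻¹)))
  rw [aux_inv_img] at h
  rw [h]
  have heq : EqOn (fun w : ℝ => |(-((w:ℝ)^2)⁻¹)| • ((((w:ℝ)⁻¹) ^ 2)⁻¹ * Real.exp (-(a * (w⁻¹)⁻¹))))
      (fun w : ℝ => Real.exp (-(a * w))) (Ioi 0) := by
    intro w hw
    have hw0 : (w:ℝ) ≠ 0 := ne_of_gt hw
    simp only [smul_eq_mul, abs_neg, abs_inv, sq_abs, inv_inv, inv_pow]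
    field_simp
    rw [abs_of_nonneg (sq_nonneg w)]
  rw [setIntegral_congr_fun measurableSet_Ioi heq, aux_exp_int ha]

lemma aux_sq_img {k : ℝ} (hk : 0 < k) : (fun u : ℝ => u ^ 2) '' (Ioi (Real.sqrt k)) = Ioi k := by
  ext y; constructor
  · rintro ⟨u, hu, rfl⟩
    have : Real.sqrt k ^ 2 < u ^ 2 := by
      have h0 : (0:ℝ) ≤ Real.sqrt k := Real.sqrt_nonneg k
      have h2 := mul_self_lt_mul_self h0 hu
      nlinarith [h2]
    calc k = Real.sqrt k ^ 2 := (Real.sq_sqrt hk.le).symm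
    _ < u ^ 2 := this
  · intro hy
    have hy0 : 0 < y := hk.trans hy
    refine ⟨Real.sqrt y, ?_, Real.sq_sqrt hy0.le⟩
    exact (Real.sqrt_lt_sqrt hk.le hy)

lemma aux_sq_deriv (k : ℝ) : ∀ u ∈ Ioi (Real.sqrt k), HasDerivWithinAt (fun u : ℝ => u ^ 2)
    (2 * u) (Ioi (Real.sqrt k)) u := by
  intro u _
  simpa [mul_comm] using ((hasDerivAt_pow 2 u).hasDerivWithinAt (s := Ioi (Real.sqrt k)))

lemma aux_sq_inj {k : ℝ} (hk : 0 < k) : InjOn (fun u : ℝ => u ^ 2) (Ioi (Real.sqrt k)) := by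
  intro a ha b hb h
  have ha0 : 0 < a := lt_of_le_of_lt (Real.sqrt_nonneg k) ha
  have hb0 : 0 < b := lt_of_le_of_lt (Real.sqrt_nonneg k) hb
  simp only at h
  rw [← Real.sqrt_sq ha0.le, ← Real.sqrt_sq hb0.le, h]

lemma aux_sq_eqon {k : ℝ} (hk : 0 < k) :
    EqOn (fun u : ℝ => |2 * u| • (((u:ℝ) ^ 2) ^ (-(1:ℝ)/2) * (1 + u ^ 2)⁻¹))
      (fun u : ℝ => 2 * (1 + u ^ 2)⁻¹) (Ioi (Real.sqrt k)) := by
  intro u hu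
  have hu0 : 0 < u := lt_of_le_of_lt (Real.sqrt_nonneg k) hu
  have h1 : ((u:ℝ) ^ 2) ^ (-(1:ℝ)/2) = u⁻¹ := by
    rw [neg_div, Real.rpow_neg (sq_nonneg u), ← Real.sqrt_eq_rpow, Real.sqrt_sq hu0.le]
  simp only [smul_eq_mul, h1, abs_of_pos (by positivity : (0:ℝ) < 2 * u)]
  field_simp

lemma aux_outer_integrable {k : ℝ} (hk : 0 < k) :
    IntegrableOn (fun r : ℝ => r ^ (-(1:ℝ)/2) * (1 + r)⁻¹) (Ioi k) := by
  have h := (integrableOn_image_iff_integrableOn_abs_deriv_smul measurableSet_Ioi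
    (aux_sq_deriv k) (aux_sq_inj hk) (fun r : ℝ => r ^ (-(1:ℝ)/2) * (1 + r)⁻¹))
  rw [aux_sq_img hk] at h
  rw [h]
  refine ((integrable_inv_one_add_sq.const_mul 2).integrableOn).congr_fun
    (fun u hu => ((aux_sq_eqon hk) hu).symm) measurableSet_Ioi

lemma aux_outer_int {k : ℝ} (hk : 0 < k) :
    ∫ r in Ioi k, r ^ (-(1:ℝ)/2) * (1 + r)⁻¹ = 2 * (π/2 - Real.arctan (Real.sqrt k)) := by
  have h := integral_image_eq_integral_abs_deriv_smul measurableSet_Ioi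
    (aux_sq_deriv k) (aux_sq_inj hk) (fun r : ℝ => r ^ (-(1:ℝ)/2) * (1 + r)⁻¹)
  rw [aux_sq_img hk] at h
  rw [h, setIntegral_congr_fun measurableSet_Ioi (aux_sq_eqon hk), integral_const_mul,
    integral_Ioi_inv_one_add_sq]

noncomputable def stDens (t : ℝ) : ℝ := (2 * π * t ^ 3) ^ (-(1:ℝ)/2) * Real.exp (-1 / (2 * t))

lemma stDens_meas : Measurable stDens := by
  unfold stDens
  fun_prop

lemma stDens_nonneg {t : ℝ} (ht : 0 < t) : 0 ≤ stDens t :=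
  mul_nonneg (Real.rpow_nonneg (by positivity) _) (Real.exp_pos _).le

lemma aux_pointwise {s r : ℝ} (hs : 0 < s) (hr : 0 < r) :
    stDens s * s * stDens (s * r) =
      (1/(2*π)) * r ^ (-(3:ℝ)/2) * ((s ^ 2)⁻¹ * Real.exp (-(((1 + 1/r)/2) * s⁻¹))) := by
  have hs0 : s ≠ 0 := hs.ne'
  have hr0 : r ≠ 0 := hr.ne'
  have hA : (2*π*s^3 : ℝ) ^ (-(1:ℝ)/2) = (2*π) ^ (-(1:ℝ)/2) * (s^3) ^ (-(1:ℝ)/2) :=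
    Real.mul_rpow (by positivity) (by positivity)
  have hB : (2*π*(s*r)^3 : ℝ) ^ (-(1:ℝ)/2)
      = (2*π) ^ (-(1:ℝ)/2) * ((s^3) ^ (-(1:ℝ)/2) * (r^3) ^ (-(1:ℝ)/2)) := by
    rw [mul_pow, show (2*π*(s^3*r^3) : ℝ) = (2*π*s^3)*(r^3) by ring,
      Real.mul_rpow (by positivity) (by positivity), hA, mul_assoc]
  have hX : (2*π:ℝ) ^ (-(1:ℝ)/2) * (2*π) ^ (-(1:ℝ)/2) = (2*π)⁻¹ := by
    rw [← Real.rpow_add (by positivity), show (-(1:ℝ)/2 + -(1:ℝ)/2) = -1 by ring,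
      Real.rpow_neg_one]
  have hY : (s^3:ℝ) ^ (-(1:ℝ)/2) * (s^3) ^ (-(1:ℝ)/2) = (s^3)⁻¹ := by
    rw [← Real.rpow_add (by positivity), show (-(1:ℝ)/2 + -(1:ℝ)/2) = -1 by ring,
      Real.rpow_neg_one]
  have hZ : (r^3:ℝ) ^ (-(1:ℝ)/2) = r ^ (-(3:ℝ)/2) := by
    rw [← Real.rpow_natCast r 3, ← Real.rpow_mul hr.le]
    norm_num
  have hE : Real.exp (-1/(2*s)) * Real.exp (-1/(2*(s*r)))
      = Real.exp (-(((1 + 1/r)/2) * s⁻¹)) := by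
    rw [← Real.exp_add]
    congr 1
    field_simp
    ring
  unfold stDens
  rw [hA, hB]
  calc (2*π:ℝ) ^ (-(1:ℝ)/2) * (s^3) ^ (-(1:ℝ)/2) * Real.exp (-1 / (2*s)) * s *
        ((2*π) ^ (-(1:ℝ)/2) * ((s^3) ^ (-(1:ℝ)/2) * (r^3) ^ (-(1:ℝ)/2)) * Real.exp (-1/(2*(s*r))))
      = ((2*π:ℝ) ^ (-(1:ℝ)/2) * (2*π) ^ (-(1:ℝ)/2)) * ((s^3) ^ (-(1:ℝ)/2) * (s^3) ^ (-(1:ℝ)/2)) *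
        (r^3) ^ (-(1:ℝ)/2) * s * (Real.exp (-1/(2*s)) * Real.exp (-1/(2*(s*r)))) := by ring
    _ = (2*π)⁻¹ * (s^3)⁻¹ * r ^ (-(3:ℝ)/2) * s * Real.exp (-(((1 + 1/r)/2) * s⁻¹)) := by
        rw [hX, hY, hZ, hE]
    _ = (1/(2*π)) * r ^ (-(3:ℝ)/2) * ((s ^ 2)⁻¹ * Real.exp (-(((1 + 1/r)/2) * s⁻¹))) := by
        field_simp

lemma aux_inner {r : ℝ} (hr : 0 < r) :
    ∫⁻ s in Ioi (0:ℝ), ENNReal.ofReal (stDens s * s * stDens (s * r)) =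
      ENNReal.ofReal ((1/π) * (r ^ (-(1:ℝ)/2) * (1 + r)⁻¹)) := by
  have ha : 0 < ((1 + 1/r)/2 : ℝ) := by positivity
  have hcst : (0:ℝ) ≤ (1/(2*π)) * r ^ (-(3:ℝ)/2) :=
    mul_nonneg (by positivity) (Real.rpow_nonneg hr.le _)
  rw [setLIntegral_congr_fun measurableSet_Ioi
    (fun s hs => by rw [aux_pointwise hs hr])]
  simp_rw [ENNReal.ofReal_mul hcst]
  rw [lintegral_const_mul' _ _ ENNReal.ofReal_ne_top,
    ← ofReal_integral_eq_lintegral_ofReal (aux_inv_sq_exp_integrable ha)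
      (ae_of_all _ fun s => by positivity),
    aux_inv_sq_exp ha, ← ENNReal.ofReal_mul hcst]
  congr 1
  have hsplit : r ^ (-(3:ℝ)/2) = r ^ (-(1:ℝ)/2) * r⁻¹ := by
    rw [← Real.rpow_neg_one r, ← Real.rpow_add hr]
    norm_num
  rw [hsplit]
  have h1r : (1 + 1/r : ℝ) ≠ 0 := by positivity
  have h1r' : (1 + r : ℝ) ≠ 0 := by positivity
  field_simp
  ring

theorem stable_half_ratio_eq_cauchy_law
    {Ω : Type*} [MeasurableSpace Ω] (P : Measure Ω) [IsProbabilityMeasure P]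
    {Ω' : Type*} [MeasurableSpace Ω'] (P' : Measure Ω') [IsProbabilityMeasure P']
    (T₁ T₂ : Ω → ℝ) (hT₁ : Measurable T₁) (hT₂ : Measurable T₂)
    (hlaw₁ : P.map T₁ = (volume.restrict (Set.Ioi (0:ℝ))).withDensity
      (fun t => ENNReal.ofReal ((2 * π * t ^ 3) ^ (-(1:ℝ)/2) * Real.exp (-1 / (2 * t)))))
    (hlaw₂ : P.map T₂ = (volume.restrict (Set.Ioi (0:ℝ))).withDensity
      (fun t => ENNReal.ofReal ((2 * π * t ^ 3) ^ (-(1:ℝ)/2) * Real.exp (-1 / (2 * t)))))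
    (hindep : IndepFun T₁ T₂ P)
    (c : ℝ) (hc : 0 < c)
    (C : Ω' → ℝ) (hC : Measurable C)
    (hClaw : P'.map C = volume.withDensity (fun x => ENNReal.ofReal (1 / (π * (1 + x ^ 2))))) :
    P.map (fun ω => T₁ ω / (T₁ ω + c ^ 2 * T₂ ω)) =
      P'.map (fun ω => 1 / (1 + c ^ 2 * C ω ^ 2)) := by
  have hratio : Measurable fun ω => T₁ ω / (T₁ ω + c ^ 2 * T₂ ω) :=
    hT₁.div (hT₁.add (hT₂.const_mul (c ^ 2)))
  have hg : Measurable fun ω => 1 / (1 + c ^ 2 * C ω ^ 2) :=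
    measurable_const.div (measurable_const.add ((hC.pow_const 2).const_mul (c ^ 2)))
  haveI := Measure.isProbabilityMeasure_map (μ := P) hratio.aemeasurable
  haveI := Measure.isProbabilityMeasure_map (μ := P') hg.aemeasurable
  set dens : ℝ → ℝ≥0∞ := fun t => ENNReal.ofReal (stDens t) with hdens_def
  set μ : Measure ℝ := (volume.restrict (Ioi (0:ℝ))).withDensity dens with hμ_def
  have hlaw₁' : P.map T₁ = μ := hlaw₁
  have hlaw₂' : P.map T₂ = μ := hlaw₂
  have hdens_meas : Measurable dens := ENNReal.measurable_ofReal.comp stDens_meas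
  have hTpos : ∀ (T : Ω → ℝ), Measurable T → P.map T = μ → ∀ᵐ ω ∂P, 0 < T ω := by
    intro T hT hl
    have h0 : P (T ⁻¹' (Iic 0)) = 0 := by
      rw [← Measure.map_apply hT measurableSet_Iic, hl, hμ_def,
        withDensity_apply _ measurableSet_Iic, Measure.restrict_restrict measurableSet_Iic]
      have he : Iic (0:ℝ) ∩ Ioi 0 = ∅ := by
        ext u
        simp only [mem_inter_iff, mem_Iic, mem_Ioi, mem_empty_iff_false, iff_false, not_and,
          not_lt]
        exact fun h => h
      rw [he, Measure.restrict_empty, lintegral_zero_measure]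
    rw [ae_iff]
    convert h0 using 2
    ext ω; simp [not_lt]
  have hT₁pos := hTpos T₁ hT₁ hlaw₁'
  have hT₂pos := hTpos T₂ hT₂ hlaw₂'
  refine Measure.ext_of_Iic _ _ (fun x => ?_)
  rw [Measure.map_apply hratio measurableSet_Iic, Measure.map_apply hg measurableSet_Iic]
  rcases le_or_gt x 0 with hx0 | hx0
  · have hre : (fun ω => 1 / (1 + c ^ 2 * C ω ^ 2)) ⁻¹' (Iic x) = ∅ := by
      ext ω
      simp only [mem_preimage, mem_Iic, mem_empty_iff_false, iff_false, not_le]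
      have hpos : 0 < 1 / (1 + c ^ 2 * C ω ^ 2) := by positivity
      linarith
    have hle : P ((fun ω => T₁ ω / (T₁ ω + c ^ 2 * T₂ ω)) ⁻¹' (Iic x)) = 0 := by
      rw [measure_eq_zero_iff_ae_notMem]
      filter_upwards [hT₁pos, hT₂pos] with ω h1 h2
      intro hmem
      simp only [mem_preimage, mem_Iic] at hmem
      have : 0 < T₁ ω / (T₁ ω + c ^ 2 * T₂ ω) :=
        div_pos h1 (add_pos h1 (mul_pos (pow_pos hc 2) h2))
      linarith
    rw [hle, hre, measure_empty]
  rcases le_or_gt 1 x with hx1 | hx1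
  · have hre : (fun ω => 1 / (1 + c ^ 2 * C ω ^ 2)) ⁻¹' (Iic x) = univ := by
      ext ω
      simp only [mem_preimage, mem_Iic, mem_univ, iff_true]
      have hd : (0:ℝ) < 1 + c ^ 2 * C ω ^ 2 := by positivity
      have h1 : 1 / (1 + c ^ 2 * C ω ^ 2) ≤ 1 := by
        rw [div_le_one hd]; nlinarith [sq_nonneg (c * C ω)]
      linarith
    have haein : ∀ᵐ ω ∂P, ω ∈ (fun ω => T₁ ω / (T₁ ω + c ^ 2 * T₂ ω)) ⁻¹' (Iic x) := by
      filter_upwards [hT₁pos, hT₂pos] with ω h1 h2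
      simp only [mem_preimage, mem_Iic]
      have hd : 0 < T₁ ω + c ^ 2 * T₂ ω := add_pos h1 (mul_pos (pow_pos hc 2) h2)
      have hlt : T₁ ω / (T₁ ω + c ^ 2 * T₂ ω) < 1 := by
        rw [div_lt_one hd]; nlinarith [mul_pos (pow_pos hc 2) h2]
      linarith
    have hc0 : P (((fun ω => T₁ ω / (T₁ ω + c ^ 2 * T₂ ω)) ⁻¹' (Iic x))ᶜ) = 0 := by
      rw [measure_eq_zero_iff_ae_notMem]
      filter_upwards [haein] with ω h
      simpa using h
    rw [measure_congr (ae_eq_univ.mpr hc0), hre, measure_univ, measure_univ]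
  · set k : ℝ := (1 - x) / (x * c ^ 2) with hk_def
    have hxc : 0 < x * c ^ 2 := mul_pos hx0 (pow_pos hc 2)
    have hk : 0 < k := div_pos (by linarith) hxc
    set b : ℝ := Real.sqrt k with hb_def
    have hb : 0 < b := Real.sqrt_pos.mpr hk
    have harct : Real.arctan b ≤ π / 2 := (Real.arctan_lt_pi_div_two b).le
    have hnn1 : (0:ℝ) ≤ (1/π) * (π/2 - Real.arctan b) :=
      mul_nonneg (by positivity) (by linarith)
    -- RHS
    have hSmeas : MeasurableSet {t : ℝ | 1 / (1 + c ^ 2 * t ^ 2) ≤ x} :=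
      measurableSet_le (measurable_const.div (by fun_prop)) measurable_const
    have hRpre : (fun ω => 1 / (1 + c ^ 2 * C ω ^ 2)) ⁻¹' (Iic x)
        = C ⁻¹' {t : ℝ | 1 / (1 + c ^ 2 * t ^ 2) ≤ x} := rfl
    have hSset : {t : ℝ | 1 / (1 + c ^ 2 * t ^ 2) ≤ x} = Iic (-b) ∪ Ici b := by
      ext t
      have hd : (0:ℝ) < 1 + c ^ 2 * t ^ 2 := by positivity
      simp only [mem_setOf_eq, mem_union, mem_Iic, mem_Ici]
      constructor
      · intro h
        rw [div_le_iff₀ hd] at h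
        have hk2 : k ≤ t ^ 2 := by
          rw [hk_def, div_le_iff₀ hxc]; nlinarith
        have habs : b ≤ |t| := by
          rw [hb_def, ← Real.sqrt_sq_eq_abs]
          exact Real.sqrt_le_sqrt hk2
        rcases le_abs.mp habs with h' | h'
        · exact Or.inr h'
        · exact Or.inl (by linarith)
      · intro h
        have hbk : b ^ 2 = k := Real.sq_sqrt hk.le
        have hk2 : k ≤ t ^ 2 := by
          rcases h with h' | h'
          · nlinarith
          · nlinarith
        rw [div_le_iff₀ hd]
        rw [hk_def, div_le_iff₀ hxc] at hk2
        nlinarith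
    have hcptw : ∀ t : ℝ, 1 / (π * (1 + t ^ 2)) = (1/π) * (1 + t ^ 2)⁻¹ := fun t => by
      rw [one_div, mul_inv, one_div]
    have hcint : Integrable (fun t : ℝ => (1/π) * (1 + t ^ 2)⁻¹) volume :=
      integrable_inv_one_add_sq.const_mul (1/π)
    have hRHS : P' ((fun ω => 1 / (1 + c ^ 2 * C ω ^ 2)) ⁻¹' (Iic x))
        = ENNReal.ofReal ((1/π) * (π/2 - Real.arctan b))
          + ENNReal.ofReal ((1/π) * (π/2 - Real.arctan b)) := by
      rw [hRpre, ← Measure.map_apply hC hSmeas, hClaw, hSset,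
        withDensity_apply _ (measurableSet_Iic.union measurableSet_Ici),
        lintegral_union measurableSet_Ici
          (by rw [Set.disjoint_left]; intro t h1 h2
              simp only [mem_Iic] at h1; simp only [mem_Ici] at h2; linarith)]
      congr 1
      · simp_rw [hcptw]
        rw [← ofReal_integral_eq_lintegral_ofReal hcint.integrableOn
            (ae_of_all _ fun t => by positivity),
          integral_const_mul, integral_Iic_inv_one_add_sq]
        congr 1
        rw [Real.arctan_neg]
        ring
      · simp_rw [hcptw]
        rw [setLIntegral_congr (Ioi_ae_eq_Ici (a := b)).symm,
          ← ofReal_integral_eq_lintegral_ofReal hcint.integrableOn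
            (ae_of_all _ fun t => by positivity),
          integral_const_mul, integral_Ioi_inv_one_add_sq]
    -- LHS
    haveI hμprob : IsProbabilityMeasure μ := hlaw₁' ▸ Measure.isProbabilityMeasure_map hT₁.aemeasurable
    have hS₂ : MeasurableSet {p : ℝ × ℝ | p.1 / (p.1 + c ^ 2 * p.2) ≤ x} :=
      measurableSet_le (measurable_fst.div (measurable_fst.add (measurable_snd.const_mul _)))
        measurable_const
    have hjoint : P.map (fun ω => (T₁ ω, T₂ ω)) = μ.prod μ := by
      rw [(indepFun_iff_map_prod_eq_prod_map_map hT₁.aemeasurable hT₂.aemeasurable).mp hindep,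
        hlaw₁', hlaw₂']
    have hLpre : (fun ω => T₁ ω / (T₁ ω + c ^ 2 * T₂ ω)) ⁻¹' (Iic x)
        = (fun ω => (T₁ ω, T₂ ω)) ⁻¹' {p : ℝ × ℝ | p.1 / (p.1 + c ^ 2 * p.2) ≤ x} := rfl
    have hslice : ∀ s : ℝ, 0 < s →
        μ (Prod.mk s ⁻¹' {p : ℝ × ℝ | p.1 / (p.1 + c ^ 2 * p.2) ≤ x})
          = ENNReal.ofReal s * ∫⁻ r in Ici k, ENNReal.ofReal (stDens (s * r)) := by
      intro s hs
      have hpre : Prod.mk s ⁻¹' {p : ℝ × ℝ | p.1 / (p.1 + c ^ 2 * p.2) ≤ x}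
          = {t : ℝ | s / (s + c ^ 2 * t) ≤ x} := rfl
      have hAmeas : MeasurableSet {t : ℝ | s / (s + c ^ 2 * t) ≤ x} :=
        measurableSet_le (measurable_const.div (by fun_prop)) measurable_const
      have hint : {t : ℝ | s / (s + c ^ 2 * t) ≤ x} ∩ Ioi 0 = Ici (s * k) := by
        ext t
        simp only [mem_inter_iff, mem_setOf_eq, mem_Ioi, mem_Ici]
        constructor
        · rintro ⟨h1, ht⟩
          have hd : 0 < s + c ^ 2 * t := add_pos hs (mul_pos (pow_pos hc 2) ht)
          rw [div_le_iff₀ hd] at h1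
          rw [hk_def, ← mul_div_assoc, div_le_iff₀ hxc]
          nlinarith
        · intro h
          have hskpos : 0 < s * k := mul_pos hs hk
          have ht : 0 < t := lt_of_lt_of_le hskpos h
          have hd : 0 < s + c ^ 2 * t := add_pos hs (mul_pos (pow_pos hc 2) ht)
          refine ⟨?_, ht⟩
          rw [div_le_iff₀ hd]
          rw [hk_def, ← mul_div_assoc, div_le_iff₀ hxc] at h
          nlinarith
      rw [hpre, hμ_def, withDensity_apply _ hAmeas, Measure.restrict_restrict hAmeas, hint]
      have hs0 : s ≠ 0 := hs.ne'
      have hmapvol : (ENNReal.ofReal s) • Measure.map (fun r : ℝ => s * r) volume = volume := by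
        rw [Real.map_volume_mul_left hs0, smul_smul, abs_inv, abs_of_pos hs,
          ← ENNReal.ofReal_mul hs.le, mul_inv_cancel₀ hs0, ENNReal.ofReal_one, one_smul]
      calc ∫⁻ t in Ici (s * k), dens t ∂volume
          = ∫⁻ t in Ici (s * k), dens t
              ∂((ENNReal.ofReal s) • Measure.map (fun r : ℝ => s * r) volume) := by
            rw [hmapvol]
        _ = ENNReal.ofReal s
              * ∫⁻ t in Ici (s * k), dens t ∂(Measure.map (fun r : ℝ => s * r) volume) := by
            rw [Measure.restrict_smul, lintegral_smul_measure, smul_eq_mul]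
        _ = ENNReal.ofReal s * ∫⁻ r in Ici k, ENNReal.ofReal (stDens (s * r)) ∂volume := by
            congr 1
            rw [← lintegral_indicator measurableSet_Ici,
              lintegral_map (hdens_meas.indicator measurableSet_Ici) (measurable_const_mul s),
              ← lintegral_indicator measurableSet_Ici]
            refine lintegral_congr fun r => ?_
            have hmem : (s * r ∈ Ici (s * k)) ↔ (r ∈ Ici k) := by
              simp only [mem_Ici]
              exact mul_le_mul_iff_of_pos_left hs
            by_cases hr : r ∈ Ici k
            · rw [indicator_of_mem (hmem.mpr hr), indicator_of_mem hr]
            · rw [indicator_of_notMem (fun hm => hr (hmem.mp hm)), indicator_of_notMem hr]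
    have haepos : ∀ᵐ s ∂μ, 0 < s := by
      have h1 : ∀ᵐ s ∂(volume.restrict (Ioi (0:ℝ))), 0 < s := by
        filter_upwards [ae_restrict_mem measurableSet_Ioi] with s hs using hs
      exact Filter.Eventually.filter_mono (withDensity_absolutelyContinuous _ _).ae_le h1
    have hstep : ∀ s ∈ Ioi (0:ℝ),
        (dens * fun s => ENNReal.ofReal s
            * ∫⁻ r in Ici k, ENNReal.ofReal (stDens (s * r))) s
          = ∫⁻ r in Ici k, ENNReal.ofReal (stDens s * s * stDens (s * r)) := by
      intro s hs
      have hs' : (0:ℝ) < s := hs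
      have hnn : 0 ≤ stDens s := stDens_nonneg hs'
      have hnn2 : 0 ≤ stDens s * s := mul_nonneg hnn hs'.le
      simp only [Pi.mul_apply, hdens_def]
      rw [← mul_assoc, ← ENNReal.ofReal_mul hnn, ← lintegral_const_mul' _ _ ENNReal.ofReal_ne_top]
      exact lintegral_congr fun r => (ENNReal.ofReal_mul hnn2).symm
    have hFm : AEMeasurable (Function.uncurry fun s r : ℝ =>
        ENNReal.ofReal (stDens s * s * stDens (s * r)))
        ((volume.restrict (Ioi (0:ℝ))).prod (volume.restrict (Ici k))) := by
      refine Measurable.aemeasurable ?_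
      exact ENNReal.measurable_ofReal.comp
        (((stDens_meas.comp measurable_fst).mul measurable_fst).mul
          (stDens_meas.comp (measurable_fst.mul measurable_snd)))
    rw [hLpre, ← Measure.map_apply (hT₁.prodMk hT₂) hS₂, hjoint, Measure.prod_apply hS₂,
      lintegral_congr_ae (haepos.mono fun s hs => hslice s hs), hμ_def,
      lintegral_withDensity_eq_lintegral_mul_non_measurable _ hdens_meas
        (ae_of_all _ fun s => ENNReal.ofReal_lt_top),
      setLIntegral_congr_fun measurableSet_Ioi hstep,
      lintegral_lintegral_swap hFm,
      setLIntegral_congr_fun measurableSet_Ici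
        (fun r hr => aux_inner (lt_of_lt_of_le hk hr)),
      setLIntegral_congr (Ioi_ae_eq_Ici (a := k)).symm,
      ← ofReal_integral_eq_lintegral_ofReal ((aux_outer_integrable hk).const_mul (1/π))
        (by filter_upwards [ae_restrict_mem measurableSet_Ioi] with r hr
            have hr0 : (0:ℝ) < r := hk.trans hr
            exact mul_nonneg (by positivity)
              (mul_nonneg (Real.rpow_nonneg hr0.le _) (inv_nonneg.mpr (by linarith)))),
      integral_const_mul, aux_outer_int hk, hRHS, ← ENNReal.ofReal_add hnn1 hnn1, ← hb_def]
    congr 1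
    ring
end

section
/- Let C be standard Cauchy and for each integer n ≥ 2 set A(n) = 1/(1 + (n-1)²C²). Then n²·A(n) converges in distribution, as n → ∞, to C², i.e., to 1/C², which has the same law as C². -/
open MeasureTheory Real Filter
open scoped NNReal ENNReal

lemma cauchy_density_cont : Continuous (fun x : ℝ => 1 / (π * (1 + x ^ 2))) := by
  apply continuous_const.div (by continuity)
  intro x
  have : (0:ℝ) < π * (1 + x ^ 2) := by positivity
  exact this.ne'

lemma cauchy_density_nonneg (x : ℝ) : 0 ≤ 1 / (π * (1 + x ^ 2)) := by positivity

lemma key_subst (f : BoundedContinuousFunction ℝ ℝ) :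
    ∫ x in Set.Ioi (0:ℝ), (1 / (π * (1 + x ^ 2))) * f ((x ^ 2)⁻¹)
      = ∫ x in Set.Ioi (0:ℝ), (1 / (π * (1 + x ^ 2))) * f (x ^ 2) := by
  have himg : ((fun x : ℝ => x⁻¹) '' Set.Ioi (0:ℝ)) = Set.Ioi 0 := by
    ext y
    constructor
    · rintro ⟨x, hx, rfl⟩
      exact inv_pos.2 (Set.mem_Ioi.1 hx)
    · intro hy
      exact ⟨y⁻¹, Set.mem_Ioi.2 (inv_pos.2 (Set.mem_Ioi.1 hy)), inv_inv y⟩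
  have hderiv : ∀ x ∈ Set.Ioi (0:ℝ),
      HasDerivWithinAt (fun x : ℝ => x⁻¹) (-(x ^ 2)⁻¹) (Set.Ioi (0:ℝ)) x :=
    fun x hx => (hasDerivAt_inv (ne_of_gt hx)).hasDerivWithinAt
  have hinj : Set.InjOn (fun x : ℝ => x⁻¹) (Set.Ioi (0:ℝ)) :=
    fun a _ b _ hab => inv_injective hab
  have key := integral_image_eq_integral_abs_deriv_smul measurableSet_Ioi hderiv hinj
    (fun x => (1 / (π * (1 + x ^ 2))) * f (x ^ 2))
  rw [himg] at key
  rw [key]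
  apply setIntegral_congr_fun measurableSet_Ioi
  intro x hx
  have hx0 : x ≠ 0 := ne_of_gt hx
  have hx2 : (0:ℝ) < x ^ 2 := by positivity
  have h1 : (x⁻¹) ^ 2 = (x ^ 2)⁻¹ := by rw [inv_pow]
  simp only [smul_eq_mul, abs_neg, abs_inv, abs_pow, abs_of_pos (Set.mem_Ioi.1 hx), h1]
  have h5 : (0:ℝ) < (x ^ 2)⁻¹ := inv_pos.2 hx2
  generalize f ((x ^ 2)⁻¹) = y
  field_simp
  ring

theorem A_n_scaled_tendsto_cauchy_sq
    {Ω : Type*} [MeasurableSpace Ω] (P : Measure Ω) [IsProbabilityMeasure P]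
    (C : Ω → ℝ) (hC : Measurable C)
    (hClaw : P.map C = volume.withDensity (fun x => ENNReal.ofReal (1 / (π * (1 + x ^ 2)))))
    (A : ℕ → Ω → ℝ) (hA : ∀ n, A n = fun ω => 1 / (1 + ((n : ℝ) - 1) ^ 2 * C ω ^ 2)) :
    ∀ f : BoundedContinuousFunction ℝ ℝ,
      Tendsto (fun n : ℕ => ∫ ω, f ((n : ℝ) ^ 2 * A n ω) ∂P) atTop
        (nhds (∫ ω, f (C ω ^ 2) ∂P)) := by
  intro f
  -- C is a.e. nonzero
  have hC0 : ∀ᵐ ω ∂P, C ω ≠ 0 := by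
    have hnull : P (C ⁻¹' {0}) = 0 := by
      rw [← Measure.map_apply hC (measurableSet_singleton 0), hClaw]
      exact (withDensity_absolutelyContinuous volume _) (measure_singleton 0)
    rw [ae_iff]
    simpa [Set.preimage, Set.mem_singleton_iff] using hnull
  -- a.e. pointwise convergence
  have hlim : ∀ᵐ ω ∂P, Tendsto (fun n : ℕ => f ((n : ℝ) ^ 2 * A n ω)) atTop
      (nhds (f ((C ω ^ 2)⁻¹))) := by
    filter_upwards [hC0] with ω hω
    have hx2 : C ω ^ 2 ≠ 0 := pow_ne_zero _ hω
    have h1 : Tendsto (fun n : ℕ => ((n : ℝ) - 1)) atTop atTop := by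
      have := tendsto_atTop_add_const_right atTop (-1 : ℝ) tendsto_natCast_atTop_atTop
      simpa [sub_eq_add_neg] using this
    have hinv : Tendsto (fun n : ℕ => ((n : ℝ) - 1)⁻¹) atTop (nhds 0) :=
      h1.inv_tendsto_atTop
    have hu : Tendsto (fun n : ℕ => (1 + ((n : ℝ) - 1)⁻¹) ^ 2) atTop (nhds 1) := by
      have h0 : Tendsto (fun n : ℕ => (1:ℝ) + ((n : ℝ) - 1)⁻¹) atTop (nhds (1 + 0)) :=
        tendsto_const_nhds.add hinv
      have := h0.pow 2
      simpa using this
    have hv : Tendsto (fun n : ℕ => (((n : ℝ) - 1)⁻¹) ^ 2 + C ω ^ 2) atTop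
        (nhds (C ω ^ 2)) := by
      have h0 : Tendsto (fun n : ℕ => (((n : ℝ) - 1)⁻¹) ^ 2 + C ω ^ 2) atTop
          (nhds (0 ^ 2 + C ω ^ 2)) := (hinv.pow 2).add tendsto_const_nhds
      simpa using h0
    have hq : Tendsto (fun n : ℕ =>
        (1 + ((n : ℝ) - 1)⁻¹) ^ 2 / ((((n : ℝ) - 1)⁻¹) ^ 2 + C ω ^ 2)) atTop
        (nhds ((C ω ^ 2)⁻¹)) := by
      have := hu.div hv hx2
      rw [one_div] at this
      exact this
    have heq : ∀ᶠ n : ℕ in atTop,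
        (1 + ((n : ℝ) - 1)⁻¹) ^ 2 / ((((n : ℝ) - 1)⁻¹) ^ 2 + C ω ^ 2)
          = (n : ℝ) ^ 2 * A n ω := by
      filter_upwards [eventually_ge_atTop 2] with n hn
      have hn2 : (2 : ℝ) ≤ (n : ℝ) := by exact_mod_cast hn
      have hn1 : ((n : ℝ) - 1) ≠ 0 := by linarith
      have hden : (1 + ((n : ℝ) - 1) ^ 2 * C ω ^ 2) ≠ 0 := by positivity
      rw [hA]
      field_simp
      ring
    exact (f.continuous.tendsto _).comp (Tendsto.congr' heq hq)
  -- measurability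
  have hmeasA : ∀ n : ℕ, AEStronglyMeasurable (fun ω => f ((n : ℝ) ^ 2 * A n ω)) P := by
    intro n
    apply Measurable.aestronglyMeasurable
    apply f.continuous.measurable.comp
    rw [hA]
    fun_prop
  -- dominated convergence
  have hDCT := tendsto_integral_of_dominated_convergence (fun _ => ‖f‖) hmeasA
    (integrable_const _)
    (fun n => Filter.Eventually.of_forall (fun ω => f.norm_coe_le_norm _)) hlim
  -- identify the limit
  have hmap : ∀ g : ℝ → ℝ, Measurable g →
      ∫ ω, g (C ω) ∂P = ∫ x, (1 / (π * (1 + x ^ 2))) * g x := by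
    intro g hg
    rw [← integral_map hC.aemeasurable hg.aestronglyMeasurable, hClaw]
    have hmeas : Measurable fun x : ℝ => Real.toNNReal (1 / (π * (1 + x ^ 2))) :=
      measurable_real_toNNReal.comp cauchy_density_cont.measurable
    have hrw : (fun x : ℝ => ENNReal.ofReal (1 / (π * (1 + x ^ 2))))
        = fun x : ℝ => ((Real.toNNReal (1 / (π * (1 + x ^ 2))) : ℝ≥0) : ℝ≥0∞) := rfl
    rw [hrw, integral_withDensity_eq_integral_smul hmeas g]
    congr 1
    ext x
    rw [NNReal.smul_def, Real.coe_toNNReal _ (cauchy_density_nonneg x), smul_eq_mul]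
  have hg1 : Measurable fun x : ℝ => (f ((x ^ 2)⁻¹) : ℝ) := by
    apply f.continuous.measurable.comp
    fun_prop
  have hg2 : Measurable fun x : ℝ => (f (x ^ 2) : ℝ) := by
    apply f.continuous.measurable.comp
    fun_prop
  have heven : ∀ g : ℝ → ℝ,
      ∫ x, (1 / (π * (1 + x ^ 2))) * g (x ^ 2)
        = 2 * ∫ x in Set.Ioi (0:ℝ), (1 / (π * (1 + x ^ 2))) * g (x ^ 2) := by
    intro g
    have : (fun x : ℝ => (1 / (π * (1 + x ^ 2))) * g (x ^ 2))
        = fun x : ℝ => (1 / (π * (1 + |x| ^ 2))) * g (|x| ^ 2) := by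
      funext x
      rw [sq_abs]
    have habs := integral_comp_abs (f := fun x => (1 / (π * (1 + x ^ 2))) * g (x ^ 2))
    rw [← habs]
    exact integral_congr_ae (Filter.Eventually.of_forall fun x => by simp [sq_abs])
  have hEq : ∫ ω, f ((C ω ^ 2)⁻¹) ∂P = ∫ ω, f (C ω ^ 2) ∂P := by
    rw [hmap (fun x => f ((x ^ 2)⁻¹)) hg1, hmap (fun x => f (x ^ 2)) hg2]
    have e1 := heven (fun y => f y⁻¹)
    have e2 := heven (fun y => f y)
    rw [e1, e2, key_subst f]
  rw [← hEq]
  exact hDCT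
end
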